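/- Let n ≥ q ≥ 1 be integers, let v ∈ ℝⁿ have all entries positive, let X ∈ F_v, and let X⊥ be an n×(n−q) real matrix such that (X X⊥) is orthogonal. Then T_X and N_X are linear subspaces of ℝ^{n×q} and N_X equals the orthogonal complement of T_X with respect to the Frobenius inner product ⟨U,V⟩ = trace(UᵀV). -/

import Mathlib

open Matrix

private lemma frob_eq_zero {m k : Type*} [Fintype m] [Fintype k]
    (M : Matrix m k ℝ) (h : Matrix.trace (Mᵀ * M) = 0) : M = 0 := by
  have h' : ∑ j : k, ∑ i : m, M i j * M i j = 0 := by
    simpa [Matrix.trace, Matrix.mul_apply, Matrix.diag] using h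
  ext i j
  have h1 : ∀ j ∈ Finset.univ (α := k), (0:ℝ) ≤ ∑ i : m, M i j * M i j := by
    intro j _; exact Finset.sum_nonneg fun i _ => mul_self_nonneg _
  have h2 := (Finset.sum_eq_zero_iff_of_nonneg h1).mp h' j (Finset.mem_univ j)
  have h3 : ∀ i ∈ Finset.univ (α := m), (0:ℝ) ≤ M i j * M i j :=
    fun i _ => mul_self_nonneg _
  have := (Finset.sum_eq_zero_iff_of_nonneg h3).mp h2 i (Finset.mem_univ i)
  simpa [mul_self_eq_zero] using this

private lemma trans_mul_mul {m k l p : Type*} [Fintype m] [Fintype k] [Fintype l]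
    (P : Matrix m k ℝ) (Q : Matrix m l ℝ) (A : Matrix k p ℝ) (B : Matrix l p ℝ) :
    (P * A)ᵀ * (Q * B) = Aᵀ * (Pᵀ * Q) * B := by
  rw [Matrix.transpose_mul]
  simp only [Matrix.mul_assoc]

private lemma mul_vecMulVec {m k l : Type*} [Fintype k]
    (P : Matrix m k ℝ) (u : k → ℝ) (w : l → ℝ) :
    P * vecMulVec u w = vecMulVec (P *ᵥ u) w := by
  ext i j
  simp [Matrix.mul_apply, Matrix.vecMulVec_apply, Matrix.mulVec, dotProduct,
    Finset.sum_mul, mul_assoc]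

private lemma trace_vecMulVec_trans_mul {m k : Type*} [Fintype m] [Fintype k]
    (u : m → ℝ) (w : k → ℝ) (K : Matrix m k ℝ) :
    Matrix.trace ((vecMulVec u w)ᵀ * K) = u ⬝ᵥ (K *ᵥ w) := by
  simp only [Matrix.trace, Matrix.diag, Matrix.mul_apply, Matrix.transpose_apply,
    Matrix.vecMulVec_apply, dotProduct, Matrix.mulVec]
  rw [Finset.sum_comm]
  congr 1; ext i
  rw [Finset.mul_sum]
  congr 1; ext j
  ring

private lemma trace_sym_skew {k : Type*} [Fintype k] (S Ω : Matrix k k ℝ)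
    (hS : Sᵀ = S) (hΩ : Ωᵀ = -Ω) : Matrix.trace (S * Ω) = 0 := by
  have h1 : Matrix.trace ((S * Ω)ᵀ) = Matrix.trace (S * Ω) := Matrix.trace_transpose _
  rw [Matrix.transpose_mul, hS, hΩ, Matrix.neg_mul, Matrix.trace_neg,
    Matrix.trace_mul_comm] at h1
  linarith

/-- For `X ∈ F_v` and `X⊥` with `(X X⊥)` orthogonal, both
`T_X = {XΩ + X⊥K : Ωᵀ = −Ω, K (Xᵀv) = 0}` and `N_X = {XS + X⊥ u vᵀ X : Sᵀ = S}` are linear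
subspaces of `ℝ^{n×q}`, and `N_X` is the orthogonal complement of `T_X` with respect to the
Frobenius inner product `⟨U, V⟩ = trace(Uᵀ V)`. -/
theorem stmt_7 (n q : ℕ) (hq : 1 ≤ q) (hnq : q ≤ n)
    (v : Fin n → ℝ) (hv : ∀ i, 0 < v i)
    (X : Matrix (Fin n) (Fin q) ℝ)
    (hX : Xᵀ * X = 1 ∧ ∃ c : Fin q → ℝ, X *ᵥ c = v)
    (Xp : Matrix (Fin n) (Fin (n - q)) ℝ)
    (hO : (fromCols X Xp)ᵀ * fromCols X Xp = 1)
    (Tset Nset : Set (Matrix (Fin n) (Fin q) ℝ))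
    (hT : Tset = {V | ∃ (Ω : Matrix (Fin q) (Fin q) ℝ) (K : Matrix (Fin (n - q)) (Fin q) ℝ),
      Ωᵀ = -Ω ∧ K *ᵥ (Xᵀ *ᵥ v) = 0 ∧ V = X * Ω + Xp * K})
    (hN : Nset = {U | ∃ (S : Matrix (Fin q) (Fin q) ℝ) (u : Fin (n - q) → ℝ),
      Sᵀ = S ∧ U = X * S + vecMulVec (Xp *ᵥ u) (v ᵥ* X)}) :
    (∃ T : Submodule ℝ (Matrix (Fin n) (Fin q) ℝ),
      (T : Set (Matrix (Fin n) (Fin q) ℝ)) = Tset) ∧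
    (∃ N : Submodule ℝ (Matrix (Fin n) (Fin q) ℝ),
      (N : Set (Matrix (Fin n) (Fin q) ℝ)) = Nset) ∧
    Nset = {U | ∀ V ∈ Tset, Matrix.trace (Uᵀ * V) = 0} := by
  obtain ⟨hXX, c, hc⟩ := hX
  subst hT hN
  set w : Fin q → ℝ := Xᵀ *ᵥ v with hw
  -- block identities from orthogonality
  have hO' := hO
  rw [transpose_fromCols, fromRows_mul_fromCols, ← fromBlocks_one] at hO'
  have h12 : Xᵀ * Xp = 0 := by
    have h := congrArg Matrix.toBlocks₁₂ hO'
    rwa [Matrix.toBlocks_fromBlocks₁₂, Matrix.toBlocks_fromBlocks₁₂] at h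
  have h21 : Xpᵀ * X = 0 := by
    have h := congrArg Matrix.toBlocks₂₁ hO'
    rwa [Matrix.toBlocks_fromBlocks₂₁, Matrix.toBlocks_fromBlocks₂₁] at h
  have h22 : Xpᵀ * Xp = 1 := by
    have h := congrArg Matrix.toBlocks₂₂ hO'
    rwa [Matrix.toBlocks_fromBlocks₂₂, Matrix.toBlocks_fromBlocks₂₂] at h
  have e : (Fin q ⊕ Fin (n - q)) ≃ Fin n :=
    finSumFinEquiv.trans (finCongr (Nat.add_sub_cancel' hnq))
  have hO2 : fromCols X Xp * (fromCols X Xp)ᵀ = 1 :=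
    (mul_eq_one_comm_of_equiv e).mp hO
  rw [transpose_fromCols, fromCols_mul_fromRows] at hO2
  -- facts about w
  have hwc : w = c := by
    rw [hw, ← hc, Matrix.mulVec_mulVec, hXX, Matrix.one_mulVec]
  have hXw : X *ᵥ w = v := by rw [hwc, hc]
  have hn0 : 0 < n := lt_of_lt_of_le hq hnq
  have hwne : w ≠ 0 := by
    intro h
    have : v = 0 := by rw [← hXw, h, Matrix.mulVec_zero]
    exact absurd (hv ⟨0, hn0⟩) (by simp [this])
  have hww : w ⬝ᵥ w ≠ 0 := fun h => hwne (dotProduct_self_eq_zero.mp h)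
  have hvX : v ᵥ* X = w := (Matrix.mulVec_transpose X v).symm
  -- the perpendicularity statement (third part), proved first
  have hperp : {U | ∃ (S : Matrix (Fin q) (Fin q) ℝ) (u : Fin (n - q) → ℝ),
      Sᵀ = S ∧ U = X * S + vecMulVec (Xp *ᵥ u) (v ᵥ* X)} =
      {U | ∀ V ∈ {V | ∃ (Ω : Matrix (Fin q) (Fin q) ℝ) (K : Matrix (Fin (n - q)) (Fin q) ℝ),
        Ωᵀ = -Ω ∧ K *ᵥ (Xᵀ *ᵥ v) = 0 ∧ V = X * Ω + Xp * K},
        Matrix.trace (Uᵀ * V) = 0} := by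
    ext U
    constructor
    · rintro ⟨S, u, hS, rfl⟩ V ⟨Ω, K, hΩ, hK, rfl⟩
      rw [hvX, ← _root_.mul_vecMulVec]
      set M := vecMulVec u w with hM
      have expand : (X * S + Xp * M)ᵀ * (X * Ω + Xp * K) =
          Sᵀ * (Xᵀ * X) * Ω + Sᵀ * (Xᵀ * Xp) * K + Mᵀ * (Xpᵀ * X) * Ω + Mᵀ * (Xpᵀ * Xp) * K := by
        rw [Matrix.transpose_add, Matrix.add_mul, Matrix.mul_add, Matrix.mul_add,
          trans_mul_mul, trans_mul_mul, trans_mul_mul, trans_mul_mul]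
        abel
      rw [expand, hXX, h12, h21, h22]
      simp only [Matrix.mul_one, Matrix.mul_zero, Matrix.zero_mul, Matrix.trace_add,
        Matrix.trace_zero]
      rw [hS, trace_sym_skew S Ω hS hΩ, trace_vecMulVec_trans_mul, hK]
      simp
    · intro hU
      set A := Xᵀ * U with hA
      set B := Xpᵀ * U with hB
      have hdecomp : U = X * A + Xp * B := by
        rw [hA, hB, ← Matrix.mul_assoc, ← Matrix.mul_assoc, ← Matrix.add_mul, hO2,
          Matrix.one_mul]
      have hUX : Uᵀ * X = Aᵀ := by
        rw [hA, Matrix.transpose_mul, Matrix.transpose_transpose]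
      have hUXp : Uᵀ * Xp = Bᵀ := by
        rw [hB, Matrix.transpose_mul, Matrix.transpose_transpose]
      have hskew : ∀ Ω : Matrix (Fin q) (Fin q) ℝ, Ωᵀ = -Ω →
          Matrix.trace (Aᵀ * Ω) = 0 := by
        intro Ω hΩ
        have h := hU (X * Ω) ⟨Ω, 0, hΩ, by simp, by simp⟩
        rwa [← Matrix.mul_assoc, hUX] at h
      have hKperp : ∀ K : Matrix (Fin (n - q)) (Fin q) ℝ, K *ᵥ w = 0 →
          Matrix.trace (Bᵀ * K) = 0 := by
        intro K hKw
        have h := hU (Xp * K) ⟨0, K, by simp, hKw, by simp⟩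
        rwa [← Matrix.mul_assoc, hUXp] at h
      -- A is symmetric
      have hAsym : Aᵀ = A := by
        set M := A - Aᵀ with hMdef
        have hMskew : Mᵀ = -M := by
          rw [hMdef, Matrix.transpose_sub, Matrix.transpose_transpose, neg_sub]
        have h1 : Matrix.trace (Aᵀ * M) = 0 := hskew M hMskew
        have h2 : Matrix.trace (A * M) = 0 := by
          have ht : Matrix.trace (A * M) = Matrix.trace (Mᵀ * Aᵀ) := by
            rw [← Matrix.transpose_mul, Matrix.trace_transpose]
          rw [ht, hMskew, Matrix.neg_mul, Matrix.trace_neg, Matrix.trace_mul_comm, h1,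
            neg_zero]
        have hMM : Matrix.trace (M * M) = 0 := by
          nth_rewrite 1 [hMdef]
          rw [Matrix.sub_mul, Matrix.trace_sub, h1, h2, sub_zero]
        have hM0 : M = 0 := by
          apply frob_eq_zero
          rw [hMskew, Matrix.neg_mul, Matrix.trace_neg, hMM, neg_zero]
        have := sub_eq_zero.mp hM0
        exact this.symm
      -- B has the rank-one form
      set u : Fin (n - q) → ℝ := (w ⬝ᵥ w)⁻¹ • (B *ᵥ w) with hu
      have huw : vecMulVec u w *ᵥ w = B *ᵥ w := by
        ext i
        have h1 : (vecMulVec u w *ᵥ w) i = u i * (w ⬝ᵥ w) := by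
          simp only [Matrix.mulVec, dotProduct, Matrix.vecMulVec_apply, mul_assoc,
            ← Finset.mul_sum]
        rw [h1, hu]
        simp only [Pi.smul_apply, smul_eq_mul]
        rw [mul_comm, ← mul_assoc, mul_inv_cancel₀ hww, one_mul]
      have hB0 : B = vecMulVec u w := by
        set K₀ := B - vecMulVec u w with hK₀
        have hK₀w : K₀ *ᵥ w = 0 := by
          rw [hK₀, Matrix.sub_mulVec, huw, sub_self]
        have h1 : Matrix.trace (Bᵀ * K₀) = 0 := hKperp K₀ hK₀w
        have h2 : Matrix.trace ((vecMulVec u w)ᵀ * K₀) = 0 := by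
          rw [trace_vecMulVec_trans_mul, hK₀w, dotProduct_zero]
        have hK₀0 : K₀ = 0 := by
          apply frob_eq_zero
          have ht : K₀ᵀ = Bᵀ - (vecMulVec u w)ᵀ := by
            rw [hK₀, Matrix.transpose_sub]
          rw [ht, Matrix.sub_mul, Matrix.trace_sub, h1, h2, sub_zero]
        rw [← sub_eq_zero]
        exact hK₀0
      refine ⟨A, u, hAsym, ?_⟩
      rw [hvX, ← _root_.mul_vecMulVec, ← hB0]
      exact hdecomp
    -- end perp
  refine ⟨?_, ?_, hperp⟩
  · refine ⟨{ carrier := _, add_mem' := ?_, zero_mem' := ?_, smul_mem' := ?_ }, rfl⟩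
    · rintro a b ⟨Ω₁, K₁, hΩ₁, hK₁, rfl⟩ ⟨Ω₂, K₂, hΩ₂, hK₂, rfl⟩
      refine ⟨Ω₁ + Ω₂, K₁ + K₂, ?_, ?_, ?_⟩
      · rw [Matrix.transpose_add, hΩ₁, hΩ₂, neg_add]
      · rw [Matrix.add_mulVec, hK₁, hK₂, add_zero]
      · rw [Matrix.mul_add, Matrix.mul_add]; abel
    · exact ⟨0, 0, by simp, by simp, by simp⟩
    · rintro r a ⟨Ω, K, hΩ, hK, rfl⟩
      refine ⟨r • Ω, r • K, ?_, ?_, ?_⟩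
      · rw [Matrix.transpose_smul, hΩ, smul_neg]
      · rw [smul_mulVec, hK, smul_zero]
      · simp only [Matrix.mul_smul, smul_add]
  · rw [hperp]
    refine ⟨{ carrier := _, add_mem' := ?_, zero_mem' := ?_, smul_mem' := ?_ }, rfl⟩
    · intro a b ha hb V hV
      rw [Matrix.transpose_add, Matrix.add_mul, Matrix.trace_add, ha V hV, hb V hV, add_zero]
    · intro V hV; simp
    · intro r a ha V hV
      rw [Matrix.transpose_smul, Matrix.smul_mul, Matrix.trace_smul, ha V hV, smul_zero]
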